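/- In the graded ring H = ℤ[u,y]/(u³, y³ − 3uy² + 6u²y), the element h := y² − 3uy + 6u² satisfies h·y² = 0, h² = 6·(u²y²), and 2h = 3a − y² where a = y² − 2uy + 4u². Consequently 2h + y² is divisible by 3 in H. -/
import Mathlib


open MvPolynomial

/-- The polynomial ring ℤ[u, y] in the classes u (pulled back hyperplane class)
and y (relative hyperplane class). -/
abbrev P2 := MvPolynomial (Fin 2) ℤ

/-- u as a polynomial variable. -/
noncomputable def uP : P2 := X 0

/-- y as a polynomial variable. -/
noncomputable def yP : P2 := X 1

/-- The relations ideal (u³, y³ − 3uy² + 6u²y). -/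
noncomputable def relIdeal : Ideal P2 :=
  Ideal.span {uP ^ 3, yP ^ 3 - 3 * uP * yP ^ 2 + 6 * uP ^ 2 * yP}

/-- The cohomology ring H = ℤ[u,y]/(u³, y³ − 3uy² + 6u²y) of the resolution Ỹ
of the secant variety of the Veronese surface. -/
abbrev H := P2 ⧸ relIdeal

/-- The class u in H. -/
noncomputable def u : H := Ideal.Quotient.mk _ uP

/-- The class y in H. -/
noncomputable def y : H := Ideal.Quotient.mk _ yP

/-!
STATEMENT 15: In H = ℤ[u,y]/(u³, y³ − 3uy² + 6u²y), the element
h = y² − 3uy + 6u² satisfies h·y² = 0, h² = 6·(u²y²), 2h = 3a − y² where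
a = y² − 2uy + 4u², and consequently 2h + y² is divisible by 3 in H.
-/

/-- The special class h = y² − 3uy + 6u². -/
noncomputable def h : H := y ^ 2 - 3 * u * y + 6 * u ^ 2

/-- The distinguished class a = y² − 2uy + 4u². -/
noncomputable def a : H := y ^ 2 - 2 * u * y + 4 * u ^ 2


lemma mem_rel (p : P2)
    (hp : ∃ m n : P2, m * uP ^ 3 + n * (yP ^ 3 - 3 * uP * yP ^ 2 + 6 * uP ^ 2 * yP) = p) :
    p ∈ relIdeal := by
  obtain ⟨m, n, hmn⟩ := hp
  rw [relIdeal, Ideal.mem_span_pair]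
  exact ⟨m, n, hmn⟩

lemma key (p : P2)
    (hp : ∃ m n : P2, m * uP ^ 3 + n * (yP ^ 3 - 3 * uP * yP ^ 2 + 6 * uP ^ 2 * yP) = p) :
    (Ideal.Quotient.mk relIdeal) p = 0 :=
  (Ideal.Quotient.eq_zero_iff_mem).2 (mem_rel p hp)

theorem stmt15 :
    h * y ^ 2 = 0 ∧
    h ^ 2 = 6 * (u ^ 2 * y ^ 2) ∧
    2 * h = 3 * a - y ^ 2 ∧
    ∃ c : H, 2 * h + y ^ 2 = 3 * c := by
  have h1 : h * y ^ 2 = 0 := by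
    have : h * y ^ 2 =
        (Ideal.Quotient.mk relIdeal) (yP * (yP ^ 3 - 3 * uP * yP ^ 2 + 6 * uP ^ 2 * yP)) := by
      simp only [h, u, y]
      simp only [map_mul, map_pow, map_add, map_sub, map_ofNat, map_one]
      ring
    rw [this]
    exact key _ ⟨0, yP, by ring⟩
  have h2 : h ^ 2 = 6 * (u ^ 2 * y ^ 2) := by
    have : h ^ 2 - 6 * (u ^ 2 * y ^ 2) =
        (Ideal.Quotient.mk relIdeal)
          ((36 * uP - 18 * yP) * uP ^ 3 +
            (yP - 3 * uP) * (yP ^ 3 - 3 * uP * yP ^ 2 + 6 * uP ^ 2 * yP)) := by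
      simp only [h, u, y]
      simp only [map_mul, map_pow, map_add, map_sub, map_ofNat, map_one]
      ring
    have hz := key _ ⟨36 * uP - 18 * yP, yP - 3 * uP, rfl⟩
    rw [hz] at this
    linear_combination this
  have h3 : 2 * h = 3 * a - y ^ 2 := by
    simp only [h, a]
    ring
  exact ⟨h1, h2, h3, ⟨a, by linear_combination h3⟩⟩
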